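/- arXiv:2508.20309 — 2 statements merged into one kernel-verified Lean document; each statement's English description precedes it below -/
import Mathlib

section
/- Let 0 < α < 1 and p, q > 0. Then the following are equivalent: (i) for every n and all n×n positive definite complex matrices A, B, log 𝒜_{α,p}(A,B) ≤ log 𝒜_{α,q}(A,B) in the Loewner order (i.e., 𝒜_{α,p}(A,B) ≤_chao 𝒜_{α,q}(A,B)); (ii) p ≤ q. -/
open Matrix
open scoped ComplexOrder

/-- Functional calculus for Hermitian matrices: apply `f` to the eigenvalues in a spectral
decomposition (junk value `0` on non-Hermitian matrices). -/
noncomputable def matFun {n : ℕ} (f : ℝ → ℝ) (A : Matrix (Fin n) (Fin n) ℂ) :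
    Matrix (Fin n) (Fin n) ℂ :=
  if hA : A.IsHermitian then hA.cfc f else 0

/-- Matrix power `A ^ r` (`r : ℝ`) by functional calculus. -/
noncomputable def mpow {n : ℕ} (A : Matrix (Fin n) (Fin n) ℂ) (r : ℝ) :
    Matrix (Fin n) (Fin n) ℂ :=
  matFun (fun x => x ^ r) A

/-- Matrix logarithm by functional calculus. -/
noncomputable def mlog {n : ℕ} (A : Matrix (Fin n) (Fin n) ℂ) : Matrix (Fin n) (Fin n) ℂ :=
  matFun Real.log A

/-- Matrix exponential (of a Hermitian matrix) by functional calculus. -/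
noncomputable def mexp {n : ℕ} (A : Matrix (Fin n) (Fin n) ℂ) : Matrix (Fin n) (Fin n) ℂ :=
  matFun Real.exp A

/-- Quasi `α`-weighted arithmetic mean `𝒜_{α,p}(A,B) = ((1-α)A^p + αB^p)^{1/p}`. -/
noncomputable def qam {n : ℕ} (α p : ℝ) (A B : Matrix (Fin n) (Fin n) ℂ) :
    Matrix (Fin n) (Fin n) ℂ :=
  mpow ((1 - α) • mpow A p + α • mpow B p) (1 / p)

/-- `t`-weighted geometric mean `A #_t B = A^{1/2} (A^{-1/2} B A^{-1/2})^t A^{1/2}`. -/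
noncomputable def gmean {n : ℕ} (t : ℝ) (A B : Matrix (Fin n) (Fin n) ℂ) :
    Matrix (Fin n) (Fin n) ℂ :=
  mpow A (1 / 2) * mpow (mpow A (-(1 / 2)) * B * mpow A (-(1 / 2))) t * mpow A (1 / 2)

/-- Quasi `α`-weighted geometric mean `G_{α,p}(A,B) = (A^p #_α B^p)^{1/p}`. -/
noncomputable def qgm {n : ℕ} (α p : ℝ) (A B : Matrix (Fin n) (Fin n) ℂ) :
    Matrix (Fin n) (Fin n) ℂ :=
  mpow (gmean α (mpow A p) (mpow B p)) (1 / p)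

/-- Rényi mean `R_{α,p}(A,B) = (A^{((1-α)/2)p} B^{αp} A^{((1-α)/2)p})^{1/p}`. -/
noncomputable def renyiMean {n : ℕ} (α p : ℝ) (A B : Matrix (Fin n) (Fin n) ℂ) :
    Matrix (Fin n) (Fin n) ℂ :=
  mpow (mpow A ((1 - α) / 2 * p) * mpow B (α * p) * mpow A ((1 - α) / 2 * p)) (1 / p)

/-- `α`-weighted Log-Euclidean mean `LE_α(A,B) = exp((1-α) log A + α log B)`. -/
noncomputable def logEuclid {n : ℕ} (α : ℝ) (A B : Matrix (Fin n) (Fin n) ℂ) :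
    Matrix (Fin n) (Fin n) ℂ :=
  mexp ((1 - α) • mlog A + α • mlog B)

/-- Quasi `α`-weighted spectral geometric mean
`SG_{α,p}(A,B) = ((A^{-p} # B^p)^α A^p (A^{-p} # B^p)^α)^{1/p}` where `# = #_{1/2}`. -/
noncomputable def sgm {n : ℕ} (α p : ℝ) (A B : Matrix (Fin n) (Fin n) ℂ) :
    Matrix (Fin n) (Fin n) ℂ :=
  mpow (mpow (gmean (1 / 2) (mpow A (-p)) (mpow B p)) α * mpow A p *
    mpow (gmean (1 / 2) (mpow A (-p)) (mpow B p)) α) (1 / p)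

/-- Loewner order: `X ≤ Y` iff `Y - X` is positive semidefinite. -/
def Loewner {n : ℕ} (X Y : Matrix (Fin n) (Fin n) ℂ) : Prop := (Y - X).PosSemidef

/-- Eigenvalues of a Hermitian matrix arranged in decreasing order:
`eigsDesc A 0 ≥ eigsDesc A 1 ≥ …` (junk value `0` on non-Hermitian matrices). -/
noncomputable def eigsDesc {n : ℕ} (A : Matrix (Fin n) (Fin n) ℂ) (i : Fin n) : ℝ :=
  if hA : A.IsHermitian then (hA.eigenvalues ∘ Tuple.sort hA.eigenvalues) i.rev else 0

namespace QamAux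

variable {n : ℕ}

local notation "Mat" => Matrix (Fin n) (Fin n) ℂ

lemma contOn (f : ℝ → ℝ) (A : Mat) : ContinuousOn f (spectrum ℝ A) :=
  (Matrix.finite_real_spectrum (A := A)).continuousOn f

lemma matFun_eq {A : Mat} (hA : A.IsHermitian) (f : ℝ → ℝ) : matFun f A = cfc f A := by
  rw [matFun, dif_pos hA, ← hA.cfc_eq]

lemma isSelfAdjoint_of_herm {A : Mat} (hA : A.IsHermitian) : IsSelfAdjoint A := hA

/-- real quadratic form -/
noncomputable def qf (X : Mat) (v : Fin n → ℂ) : ℝ := (star v ⬝ᵥ X *ᵥ v).re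

lemma dotProduct_cfc {A : Mat} (hA : A.IsHermitian) (f : ℝ → ℝ) (v : Fin n → ℂ) :
    star v ⬝ᵥ (cfc f A) *ᵥ v =
      ((∑ i, f (hA.eigenvalues i) *
        Complex.normSq ((star (hA.eigenvectorUnitary : Mat) *ᵥ v) i) : ℝ) : ℂ) := by
  rw [hA.cfc_eq, Matrix.IsHermitian.cfc, Unitary.conjStarAlgAut_apply]
  set V : Mat := (hA.eigenvectorUnitary : Mat) with hV
  set u : Fin n → ℂ := star V *ᵥ v with hu
  have h1 : (V * diagonal (RCLike.ofReal ∘ f ∘ hA.eigenvalues) * star V) *ᵥ v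
      = V *ᵥ (diagonal (RCLike.ofReal ∘ f ∘ hA.eigenvalues) *ᵥ u) := by
    simp [hu, mulVec_mulVec, Matrix.mul_assoc]
  rw [h1, dotProduct_mulVec]
  have h2 : star v ᵥ* V = star u := by
    rw [hu, star_mulVec, star_eq_conjTranspose, conjTranspose_conjTranspose]
  rw [h2]
  simp only [dotProduct, mulVec_diagonal, Function.comp_apply, Pi.star_apply, RCLike.star_def]
  have hcast : (RCLike.ofReal : ℝ → ℂ) = Complex.ofReal := rfl
  simp only [hcast]
  push_cast
  refine Finset.sum_congr rfl fun i _ => ?_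
  rw [← Complex.mul_conj]
  ring

lemma qf_cfc {A : Mat} (hA : A.IsHermitian) (f : ℝ → ℝ) (v : Fin n → ℂ) :
    qf (cfc f A) v = ∑ i, f (hA.eigenvalues i) *
      Complex.normSq ((star (hA.eigenvectorUnitary : Mat) *ᵥ v) i) := by
  rw [qf, dotProduct_cfc hA f v, Complex.ofReal_re]

lemma star_dot_herm {H : Mat} (hH : H.IsHermitian) (v : Fin n → ℂ) :
    star (star v ⬝ᵥ H *ᵥ v) = star v ⬝ᵥ H *ᵥ v := by
  conv_lhs => rw [star_dotProduct, star_star]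
  rw [star_mulVec, ← dotProduct_mulVec, hH]

lemma im_dot_herm {H : Mat} (hH : H.IsHermitian) (v : Fin n → ℂ) :
    (star v ⬝ᵥ H *ᵥ v).im = 0 := by
  have := star_dot_herm hH v
  rw [Complex.star_def, Complex.conj_eq_iff_im] at this
  exact this

lemma dot_herm_eq_qf {H : Mat} (hH : H.IsHermitian) (v : Fin n → ℂ) :
    star v ⬝ᵥ H *ᵥ v = (qf H v : ℂ) := by
  rw [qf]
  exact Complex.ext (by simp) (by simp [im_dot_herm hH v])

lemma posSemidef_of_qf {H : Mat} (hH : H.IsHermitian) (h : ∀ v, 0 ≤ qf H v) :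
    H.PosSemidef := by
  refine Matrix.PosSemidef.of_dotProduct_mulVec_nonneg hH fun v => ?_
  rw [dot_herm_eq_qf hH v]
  exact_mod_cast h v

lemma qf_sub (X Y : Mat) (v : Fin n → ℂ) : qf (Y - X) v = qf Y v - qf X v := by
  simp [qf, sub_mulVec, dotProduct_sub]

lemma loewner_iff {X Y : Mat} (hX : X.IsHermitian) (hY : Y.IsHermitian) :
    Loewner X Y ↔ ∀ v, qf X v ≤ qf Y v := by
  constructor
  · intro h v
    have h2 := h.dotProduct_mulVec_nonneg v
    rw [dot_herm_eq_qf (hY.sub hX) v] at h2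
    have : (0:ℝ) ≤ qf (Y - X) v := by exact_mod_cast h2
    rw [qf_sub] at this; linarith
  · intro h
    refine posSemidef_of_qf (hY.sub hX) fun v => ?_
    rw [qf_sub]; linarith [h v]


lemma herm_cfc (f : ℝ → ℝ) (A : Mat) : (cfc f A).IsHermitian := cfc_predicate f A

lemma spec_pos {A : Mat} (hA : A.PosDef) : ∀ x ∈ spectrum ℝ A, 0 < x := by
  rw [hA.isHermitian.spectrum_real_eq_range_eigenvalues]
  rintro x ⟨i, rfl⟩
  exact hA.eigenvalues_pos i

lemma wv_ne {A : Mat} (hA : A.IsHermitian) {v : Fin n → ℂ} (hv : v ≠ 0) :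
    star (hA.eigenvectorUnitary : Mat) *ᵥ v ≠ 0 := by
  intro h
  apply hv
  have h2 : (hA.eigenvectorUnitary : Mat) *ᵥ (star (hA.eigenvectorUnitary : Mat) *ᵥ v) = v := by
    rw [mulVec_mulVec, Unitary.mul_star_self_of_mem hA.eigenvectorUnitary.prop, one_mulVec]
  rw [h, mulVec_zero] at h2
  exact h2.symm

lemma cfc_posDef {A : Mat} (hA : A.PosDef) {f : ℝ → ℝ}
    (hf : ∀ x ∈ spectrum ℝ A, 0 < f x) : (cfc f A).PosDef := by
  refine Matrix.PosDef.of_dotProduct_mulVec_pos (herm_cfc f A) fun v hv => ?_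
  rw [dotProduct_cfc hA.isHermitian f v]
  rw [Complex.zero_lt_real]
  have hu := wv_ne hA.isHermitian hv
  obtain ⟨i, hi⟩ : ∃ i, (star (hA.isHermitian.eigenvectorUnitary : Mat) *ᵥ v) i ≠ 0 := by
    by_contra h
    push_neg at h
    exact hu (funext h)
  refine Finset.sum_pos' (fun j _ => mul_nonneg
    (le_of_lt (hf _ (hA.isHermitian.eigenvalues_mem_spectrum_real j))) (Complex.normSq_nonneg _))
    ⟨i, Finset.mem_univ i, mul_pos (hf _ (hA.isHermitian.eigenvalues_mem_spectrum_real i))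
      (Complex.normSq_pos.mpr hi)⟩

lemma cfc_posSemidef {A : Mat} (hA : A.IsHermitian) {f : ℝ → ℝ}
    (hf : ∀ x ∈ spectrum ℝ A, 0 ≤ f x) : (cfc f A).PosSemidef := by
  refine posSemidef_of_qf (herm_cfc f A) fun v => ?_
  rw [qf_cfc hA f v]
  exact Finset.sum_nonneg fun i _ => mul_nonneg (hf _ (hA.eigenvalues_mem_spectrum_real i))
    (Complex.normSq_nonneg _)

lemma mul_cfc_inv {A : Mat} (hA : A.PosDef) : A * cfc (fun x : ℝ => x⁻¹) A = 1 := by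
  have hsa : IsSelfAdjoint A := hA.isHermitian
  have h1 : cfc (fun x : ℝ => x * x⁻¹) A = 1 := by
    have he : (spectrum ℝ A).EqOn (fun x : ℝ => x * x⁻¹) (fun _ => 1) := fun x hx =>
      mul_inv_cancel₀ (ne_of_gt (spec_pos hA x hx))
    rw [cfc_congr he, cfc_const_one ℝ A]
  calc A * cfc (fun x : ℝ => x⁻¹) A
      = cfc (fun x : ℝ => x) A * cfc (fun x : ℝ => x⁻¹) A := by rw [cfc_id' ℝ A]
    _ = cfc (fun x : ℝ => x * x⁻¹) A := (cfc_mul _ _ A (contOn _ A) (contOn _ A)).symm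
    _ = 1 := h1

lemma cfc_inv_mul {A : Mat} (hA : A.PosDef) : cfc (fun x : ℝ => x⁻¹) A * A = 1 := by
  have hsa : IsSelfAdjoint A := hA.isHermitian
  have h1 : cfc (fun x : ℝ => x⁻¹ * x) A = 1 := by
    have he : (spectrum ℝ A).EqOn (fun x : ℝ => x⁻¹ * x) (fun _ => 1) := fun x hx =>
      inv_mul_cancel₀ (ne_of_gt (spec_pos hA x hx))
    rw [cfc_congr he, cfc_const_one ℝ A]
  calc cfc (fun x : ℝ => x⁻¹) A * A
      = cfc (fun x : ℝ => x⁻¹) A * cfc (fun x : ℝ => x) A := by rw [cfc_id' ℝ A]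
    _ = cfc (fun x : ℝ => x⁻¹ * x) A := (cfc_mul _ _ A (contOn _ A) (contOn _ A)).symm
    _ = 1 := h1

lemma re_star_dot (v w : Fin n → ℂ) : (star v ⬝ᵥ w).re = (star w ⬝ᵥ v).re := by
  rw [star_dotProduct]
  exact Complex.conj_re _

lemma variational {X : Mat} (hX : X.PosDef) (v w : Fin n → ℂ) :
    2 * (star w ⬝ᵥ v).re - qf X w ≤ qf (cfc (fun x : ℝ => x⁻¹) X) v := by
  set Xi : Mat := cfc (fun x : ℝ => x⁻¹) X with hXi
  have hXiherm : Xi.IsHermitian := herm_cfc _ X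
  have hm1 : X *ᵥ (Xi *ᵥ v) = v := by
    rw [mulVec_mulVec, mul_cfc_inv hX, one_mulVec]
  have hm2 : ∀ y : Fin n → ℂ, star (Xi *ᵥ v) ⬝ᵥ (X *ᵥ y) = star v ⬝ᵥ y := by
    intro y
    rw [star_mulVec, hXiherm.eq, ← dotProduct_mulVec, mulVec_mulVec, cfc_inv_mul hX, one_mulVec]
  have hexp : star (w - Xi *ᵥ v) ⬝ᵥ X *ᵥ (w - Xi *ᵥ v)
      = star w ⬝ᵥ X *ᵥ w - star w ⬝ᵥ v - star v ⬝ᵥ w + star v ⬝ᵥ (Xi *ᵥ v) := by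
    have hm3 : star (Xi *ᵥ v) ⬝ᵥ v = star v ⬝ᵥ (Xi *ᵥ v) := by
      rw [star_mulVec, hXiherm.eq, ← dotProduct_mulVec]
    rw [star_sub, sub_dotProduct, mulVec_sub, dotProduct_sub, dotProduct_sub,
      hm2 w, hm2 (Xi *ᵥ v), hm1]
    ring
  have hpos : 0 ≤ (star (w - Xi *ᵥ v) ⬝ᵥ X *ᵥ (w - Xi *ᵥ v)).re := by
    have := hX.posSemidef.re_dotProduct_nonneg (w - Xi *ᵥ v)
    simpa using this
  rw [hexp] at hpos
  simp only [Complex.add_re, Complex.sub_re] at hpos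
  have hsym : (star v ⬝ᵥ w).re = (star w ⬝ᵥ v).re := re_star_dot v w
  have hq : qf (cfc (fun x : ℝ => x⁻¹) X) v = (star v ⬝ᵥ (Xi *ᵥ v)).re := rfl
  have hq2 : qf X w = (star w ⬝ᵥ X *ᵥ w).re := rfl
  rw [hq, hq2] at *
  linarith

lemma qf_inv_eq {C : Mat} (hC : C.PosDef) (v : Fin n → ℂ) :
    qf (cfc (fun x : ℝ => x⁻¹) C) v
      = 2 * (star (cfc (fun x : ℝ => x⁻¹) C *ᵥ v) ⬝ᵥ v).re
        - qf C (cfc (fun x : ℝ => x⁻¹) C *ᵥ v) := by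
  set Ci : Mat := cfc (fun x : ℝ => x⁻¹) C with hCi
  set w : Fin n → ℂ := Ci *ᵥ v with hw
  have h1 : qf C w = (star w ⬝ᵥ v).re := by
    unfold qf
    rw [hw, mulVec_mulVec, mul_cfc_inv hC, one_mulVec]
  have h2 : qf Ci v = (star w ⬝ᵥ v).re := by
    unfold qf
    rw [← re_star_dot]
  rw [h1, h2]
  ring

lemma qf_smul (a : ℝ) (X : Mat) (v : Fin n → ℂ) : qf (a • X) v = a * qf X v := by
  unfold qf
  rw [smul_mulVec, dotProduct_smul]
  simp [Complex.real_smul]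

lemma qf_add (X Y : Mat) (v : Fin n → ℂ) : qf (X + Y) v = qf X v + qf Y v := by
  simp [qf, add_mulVec, dotProduct_add]

lemma res_convex {A B : Mat} (hA : A.PosDef) (hB : B.PosDef) {a b : ℝ}
    (ha : 0 ≤ a) (hb : 0 ≤ b) (hab : a + b = 1) (hC : (a • A + b • B).PosDef) (v : Fin n → ℂ) :
    qf (cfc (fun x : ℝ => x⁻¹) (a • A + b • B)) v
      ≤ a * qf (cfc (fun x : ℝ => x⁻¹) A) v + b * qf (cfc (fun x : ℝ => x⁻¹) B) v := by
  set C : Mat := a • A + b • B with hCdef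
  set w : Fin n → ℂ := cfc (fun x : ℝ => x⁻¹) C *ᵥ v with hw
  have hkey := qf_inv_eq hC v
  have hsplit : qf C w = a * qf A w + b * qf B w := by
    rw [hCdef]
    rw [qf_add, qf_smul, qf_smul]
  have hva := variational hA v w
  have hvb := variational hB v w
  have h2 : qf (cfc (fun x : ℝ => x⁻¹) C) v
      = a * (2 * (star w ⬝ᵥ v).re - qf A w) + b * (2 * (star w ⬝ᵥ v).re - qf B w) := by
    rw [hkey, hsplit]
    have : (a + b) * (2 * (star w ⬝ᵥ v).re) = 2 * (star w ⬝ᵥ v).re := by rw [hab]; ring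
    nlinarith [this]
  rw [h2]
  have := mul_le_mul_of_nonneg_left hva ha
  have := mul_le_mul_of_nonneg_left hvb hb
  linarith

lemma res_antitone {A B : Mat} (hA : A.PosDef) (hB : B.PosDef) (hAB : Loewner A B)
    (v : Fin n → ℂ) :
    qf (cfc (fun x : ℝ => x⁻¹) B) v ≤ qf (cfc (fun x : ℝ => x⁻¹) A) v := by
  set w : Fin n → ℂ := cfc (fun x : ℝ => x⁻¹) B *ᵥ v with hw
  have hkey := qf_inv_eq hB v
  have hle : qf A w ≤ qf B w := (loewner_iff hA.isHermitian hB.isHermitian).mp hAB w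
  have hva := variational hA v w
  rw [hkey]
  linarith


section Integrals

open MeasureTheory Set Filter Topology

lemma integrableOn_of_bound {f g : ℝ → ℝ} {s : Set ℝ} (hs : MeasurableSet s)
    (hg : IntegrableOn g s) (hf : ContinuousOn f s) (hb : ∀ x ∈ s, ‖f x‖ ≤ ‖g x‖) :
    IntegrableOn f s := by
  exact Integrable.mono hg (hf.aestronglyMeasurable hs) ((ae_restrict_iff' hs).2 (ae_of_all _ hb))

lemma integrableOn_one_add_sq_inv : IntegrableOn (fun s : ℝ => ((1+s)^2)⁻¹) (Ioi 0) := by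
  have hderiv : ∀ x ∈ Ioi (0:ℝ), HasDerivAt (fun s : ℝ => -(1+s)⁻¹) (((1+x)^2)⁻¹) x := by
    intro x hx
    have h1 : HasDerivAt (fun s : ℝ => 1+s) 1 x := (hasDerivAt_id x).const_add 1
    have hx' : (0:ℝ) < x := hx
    have h2 : (1:ℝ)+x ≠ 0 := by positivity
    have h3 := (h1.inv h2).neg
    have : -(-1 / (1 + x) ^ 2) = ((1+x)^2)⁻¹ := by field_simp
    rw [← this]
    exact h3
  have hcont : ContinuousWithinAt (fun s : ℝ => -(1+s)⁻¹) (Ici 0) 0 := by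
    apply ContinuousAt.continuousWithinAt
    have : ContinuousAt (fun s : ℝ => (1+s)⁻¹) 0 :=
      ((continuousAt_const.add continuousAt_id).inv₀ (by norm_num))
    exact this.neg
  have htend : Tendsto (fun s : ℝ => -(1+s)⁻¹) atTop (𝓝 0) := by
    have h1 : Tendsto (fun s : ℝ => 1+s) atTop atTop := tendsto_atTop_add_const_left _ 1 tendsto_id
    have := (tendsto_inv_atTop_zero.comp h1).neg
    simpa using this
  have := integrableOn_Ioi_deriv_of_nonneg hcont hderiv
    (fun x hx => by positivity) htend
  exact this

lemma integrableOn_res_diff {lam : ℝ} (hlam : 0 < lam) :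
    IntegrableOn (fun s : ℝ => (1+s)⁻¹ - (lam+s)⁻¹) (Ioi 0) := by
  refine integrableOn_of_bound measurableSet_Ioi
    (integrableOn_one_add_sq_inv.const_mul (|lam - 1| * (min 1 lam)⁻¹)) ?_ ?_
  · intro x hx
    have h1 : (1:ℝ)+x ≠ 0 := by simp at hx; positivity
    have h2 : lam+x ≠ 0 := by simp at hx; positivity
    exact (((continuousAt_const.add continuousAt_id).inv₀ h1).sub
      ((continuousAt_const.add continuousAt_id).inv₀ h2)).continuousWithinAt
  · intro x hx
    simp only [mem_Ioi] at hx
    have h1 : (0:ℝ) < 1 + x := by linarith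
    have h2 : (0:ℝ) < lam + x := by linarith
    have hmin : 0 < min 1 lam := lt_min one_pos hlam
    have hkey : min 1 lam * (1+x) ≤ lam + x := by
      rcases le_total 1 lam with h | h
      · have : min 1 lam = 1 := min_eq_left h
        rw [this]; linarith
      · have : min 1 lam = lam := min_eq_right h
        rw [this]; nlinarith
    have heq : (1+x)⁻¹ - (lam+x)⁻¹ = (lam - 1) * ((1+x) * (lam+x))⁻¹ := by
      field_simp
      ring
    rw [heq, Real.norm_eq_abs, Real.norm_eq_abs, abs_mul]
    have hb1 : |((1+x) * (lam+x))⁻¹| ≤ (min 1 lam)⁻¹ * ((1+x)^2)⁻¹ := by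
      rw [abs_of_nonneg (by positivity), ← mul_inv]
      apply inv_anti₀ (by positivity)
      calc min 1 lam * (1+x)^2 = (min 1 lam * (1+x)) * (1+x) := by ring
        _ ≤ (lam + x) * (1+x) := by nlinarith
        _ = (1+x) * (lam+x) := by ring
    calc |lam - 1| * |((1+x) * (lam+x))⁻¹|
        ≤ |lam - 1| * ((min 1 lam)⁻¹ * ((1+x)^2)⁻¹) := by
          exact mul_le_mul_of_nonneg_left hb1 (abs_nonneg _)
      _ = (|lam - 1| * (min 1 lam)⁻¹) * ((1+x)^2)⁻¹ := by ring
      _ ≤ |(|lam - 1| * (min 1 lam)⁻¹) * ((1+x)^2)⁻¹| := le_abs_self _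

lemma integral_log_rep {lam : ℝ} (hlam : 0 < lam) :
    ∫ s in Ioi (0:ℝ), ((1+s)⁻¹ - (lam+s)⁻¹) = Real.log lam := by
  have hderiv : ∀ x ∈ Ioi (0:ℝ),
      HasDerivAt (fun s : ℝ => Real.log (1+s) - Real.log (lam+s)) ((1+x)⁻¹ - (lam+x)⁻¹) x := by
    intro x hx
    simp only [mem_Ioi] at hx
    have h1 : HasDerivAt (fun s : ℝ => 1+s) 1 x := (hasDerivAt_id x).const_add 1
    have h2 : HasDerivAt (fun s : ℝ => lam+s) 1 x := (hasDerivAt_id x).const_add lam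
    have h3 := (h1.log (by positivity)).sub (h2.log (by positivity))
    simp only [one_div] at h3
    exact h3
  have hcont : ContinuousWithinAt (fun s : ℝ => Real.log (1+s) - Real.log (lam+s)) (Ici 0) 0 := by
    apply ContinuousAt.continuousWithinAt
    have h1 : ContinuousAt (fun s : ℝ => Real.log (1+s)) 0 :=
      (Real.continuousAt_log (by norm_num)).comp (continuousAt_const.add continuousAt_id)
    have h2 : ContinuousAt (fun s : ℝ => Real.log (lam+s)) 0 :=
      (Real.continuousAt_log (by simpa using ne_of_gt hlam)).comp
        (continuousAt_const.add continuousAt_id)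
    exact h1.sub h2
  have htend : Tendsto (fun s : ℝ => Real.log (1+s) - Real.log (lam+s)) atTop (𝓝 0) := by
    have hH : Tendsto (fun s : ℝ => 1 + (1 - lam)/(lam+s)) atTop (𝓝 1) := by
      have h1 : Tendsto (fun s : ℝ => lam + s) atTop atTop :=
        tendsto_atTop_add_const_left _ lam tendsto_id
      have h2 : Tendsto (fun s : ℝ => (1 - lam)/(lam+s)) atTop (𝓝 0) := by
        simpa [div_eq_mul_inv] using (tendsto_inv_atTop_zero.comp h1).const_mul (1 - lam)
      simpa using h2.const_add 1
    have hlog : Tendsto (fun s : ℝ => Real.log (1 + (1 - lam)/(lam+s))) atTop (𝓝 0) := by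
      have := (Real.continuousAt_log (by norm_num : (1:ℝ) ≠ 0)).tendsto.comp hH
      simpa [Function.comp_def] using this
    refine hlog.congr' ?_
    filter_upwards [eventually_gt_atTop 0] with s hs
    have h1 : (0:ℝ) < 1 + s := by linarith
    have h2 : (0:ℝ) < lam + s := by linarith
    have : 1 + (1 - lam)/(lam+s) = (1+s)/(lam+s) := by field_simp; ring
    rw [this, Real.log_div (by positivity) (by positivity)]
  have := integral_Ioi_of_hasDerivAt_of_tendsto hcont hderiv (integrableOn_res_diff hlam) htend
  rw [this]
  simp [Real.log_one]


noncomputable def Ir (r : ℝ) : ℝ := ∫ s in Ioi (0:ℝ), s^(r-1) * (1+s)⁻¹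

lemma contOn_kernel {r lam : ℝ} (hlam : 0 < lam) :
    ContinuousOn (fun s : ℝ => s^(r-1) * (lam+s)⁻¹) (Ioi 0) := by
  intro x hx
  have hx' : (0:ℝ) < x := hx
  exact ((Real.continuousAt_rpow_const x _ (Or.inl (ne_of_gt hx'))).mul
    ((continuousAt_const.add continuousAt_id).inv₀ (ne_of_gt (add_pos hlam hx')))).continuousWithinAt

lemma integrableOn_rpow_kernel {r : ℝ} (hr0 : 0 < r) (hr1 : r < 1) {lam : ℝ} (hlam : 0 < lam) :
    IntegrableOn (fun s : ℝ => s^(r-1) * (lam+s)⁻¹) (Ioi 0) := by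
  have hsplit : Ioi (0:ℝ) = Ioc 0 1 ∪ Ioi 1 := (Ioc_union_Ioi_eq_Ioi zero_le_one).symm
  rw [hsplit]
  apply IntegrableOn.union
  · have hint : IntegrableOn (fun s : ℝ => s^(r-1)) (Ioc (0:ℝ) 1) := by
      have h := intervalIntegral.intervalIntegrable_rpow'
        (a := 0) (b := 1) (r := r - 1) (by linarith)
      exact (intervalIntegrable_iff_integrableOn_Ioc_of_le zero_le_one).mp h
    refine integrableOn_of_bound measurableSet_Ioc (hint.const_mul lam⁻¹)
      ((contOn_kernel hlam).mono Ioc_subset_Ioi_self) ?_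
    intro x hx
    obtain ⟨hx0, hx1⟩ := hx
    have h1 : (lam+x)⁻¹ ≤ lam⁻¹ := inv_anti₀ hlam (by linarith)
    have h2 : (0:ℝ) ≤ x^(r-1) := Real.rpow_nonneg hx0.le _
    rw [Real.norm_eq_abs, Real.norm_eq_abs, abs_of_nonneg (by positivity),
      abs_of_nonneg (by positivity)]
    calc x^(r-1) * (lam+x)⁻¹ ≤ x^(r-1) * lam⁻¹ := by
          exact mul_le_mul_of_nonneg_left h1 h2
      _ = lam⁻¹ * x^(r-1) := by ring
  · refine integrableOn_of_bound measurableSet_Ioi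
      (integrableOn_Ioi_rpow_of_lt (by linarith : r - 2 < -1) one_pos)
      ((contOn_kernel hlam).mono (Ioi_subset_Ioi zero_le_one)) ?_
    intro x hx
    simp only [mem_Ioi] at hx
    have hx0 : (0:ℝ) < x := by linarith
    have h1 : (lam+x)⁻¹ ≤ x⁻¹ := inv_anti₀ hx0 (by linarith)
    have h2 : (0:ℝ) ≤ x^(r-1) := Real.rpow_nonneg hx0.le _
    have h3 : x^(r-2) = x^(r-1) * x⁻¹ := by
      rw [show r - 2 = (r-1) + (-1) by ring, Real.rpow_add hx0, Real.rpow_neg_one]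
    rw [Real.norm_eq_abs, Real.norm_eq_abs, abs_of_nonneg (by positivity),
      abs_of_nonneg (Real.rpow_nonneg hx0.le _), h3]
    exact mul_le_mul_of_nonneg_left h1 h2

lemma Ir_pos {r : ℝ} (hr0 : 0 < r) (hr1 : r < 1) : 0 < Ir r := by
  rw [Ir]
  rw [setIntegral_pos_iff_support_of_nonneg_ae]
  · have hsub : Ioi (0:ℝ) ⊆ Function.support (fun s : ℝ => s^(r-1) * (1+s)⁻¹) := by
      intro x hx
      have hx' : (0:ℝ) < x := hx
      have : (0:ℝ) < x^(r-1) * (1+x)⁻¹ := by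
        apply mul_pos (Real.rpow_pos_of_pos hx' _)
        positivity
      exact ne_of_gt this
    rw [Set.inter_eq_right.mpr hsub, Real.volume_Ioi]
    simp
  · refine (ae_restrict_iff' measurableSet_Ioi).2 (ae_of_all _ fun x hx => ?_)
    have hx' : (0:ℝ) < x := hx
    have h2 : (0:ℝ) ≤ x^(r-1) := Real.rpow_nonneg hx'.le _
    positivity
  · exact integrableOn_rpow_kernel hr0 hr1 one_pos

lemma rpow_rep {r : ℝ} (hr0 : 0 < r) (hr1 : r < 1) {lam : ℝ} (hlam : 0 < lam) :
    ∫ s in Ioi (0:ℝ), s^(r-1) * (lam * (lam+s)⁻¹) = lam^r * Ir r := by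
  have hcv := MeasureTheory.integral_comp_mul_left_Ioi
    (fun s : ℝ => s^(r-1) * (lam * (lam+s)⁻¹)) 0 hlam
  simp only [mul_zero] at hcv
  have heq : Set.EqOn (fun x : ℝ => (lam*x)^(r-1) * (lam * (lam+lam*x)⁻¹))
      (fun x : ℝ => lam^(r-1) * (x^(r-1) * (1+x)⁻¹)) (Ioi 0) := by
    intro x hx
    have hx' : (0:ℝ) < x := hx
    have hne : lam ≠ 0 := ne_of_gt hlam
    have h4 : lam + lam * x = lam * (1+x) := by ring
    simp only
    rw [Real.mul_rpow hlam.le hx'.le, h4, mul_inv]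
    have h5 : lam * (lam⁻¹ * (1+x)⁻¹) = (1+x)⁻¹ := by
      field_simp
    rw [h5]
    ring
  rw [setIntegral_congr_fun measurableSet_Ioi heq] at hcv
  rw [MeasureTheory.integral_const_mul] at hcv
  have hIr : ∫ x in Ioi (0:ℝ), x^(r-1) * (1+x)⁻¹ = Ir r := rfl
  rw [hIr] at hcv
  have : (∫ s in Ioi (0:ℝ), s^(r-1) * (lam * (lam+s)⁻¹)) = lam * (lam^(r-1) * Ir r) := by
    rw [hcv, smul_eq_mul]
    field_simp
    exact integral_congr_ae (ae_of_all _ fun s => by ring)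
  rw [this, ← mul_assoc]
  congr 1
  rw [show r = 1 + (r-1) by ring, Real.rpow_add hlam, Real.rpow_one]
  ring_nf

end Integrals

section Matrix

open MeasureTheory Set Filter Topology

lemma integrableOn_rpow_kernel' {r : ℝ} (hr0 : 0 < r) (hr1 : r < 1) {lam : ℝ} (hlam : 0 < lam) :
    IntegrableOn (fun s : ℝ => s^(r-1) * (lam * (lam+s)⁻¹)) (Ioi 0) := by
  have h := (integrableOn_rpow_kernel hr0 hr1 hlam).const_mul lam
  exact h.congr (ae_of_all _ fun s => by ring)

lemma herm_smul {A : Mat} (hA : A.IsHermitian) (c : ℝ) : (c • A).IsHermitian := by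
  have h : (c • A)ᴴ = c • Aᴴ := by
    ext i j
    simp [conjTranspose_apply, star_smul, star_trivial]
  rw [IsHermitian, h, hA.eq]

lemma qf_pos {A : Mat} (hA : A.PosDef) {v : Fin n → ℂ} (hv : v ≠ 0) : 0 < qf A v := by
  have := hA.re_dotProduct_pos hv
  simpa [qf] using this

lemma posDef_comb {A B : Mat} (hA : A.PosDef) (hB : B.PosDef) {a b : ℝ}
    (ha : 0 < a) (hb : 0 < b) : (a • A + b • B).PosDef := by
  refine Matrix.PosDef.of_dotProduct_mulVec_pos ((herm_smul hA.isHermitian a).add (herm_smul hB.isHermitian b)) fun v hv => ?_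
  rw [dot_herm_eq_qf ((herm_smul hA.isHermitian a).add (herm_smul hB.isHermitian b))]
  rw [Complex.zero_lt_real, qf_add, qf_smul, qf_smul]
  have := qf_pos hA hv
  have := qf_pos hB hv
  positivity

lemma contOn_image (f g : ℝ → ℝ) (A : Mat) : ContinuousOn g (f '' spectrum ℝ A) :=
  ((Matrix.finite_real_spectrum (A := A)).image f).continuousOn g

lemma cfc_shift {A : Mat} (hA : A.IsHermitian) (s : ℝ) :
    cfc (fun x : ℝ => x + s) A = A + s • (1 : Mat) := by
  have hsa : IsSelfAdjoint A := hA
  rw [cfc_add_const s (fun x : ℝ => x) A (contOn _ A)]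
  rw [cfc_id' ℝ A, Algebra.algebraMap_eq_smul_one]

lemma shift_posDef {A : Mat} (hA : A.PosDef) {s : ℝ} (hs : 0 < s) : (A + s • 1).PosDef := by
  rw [← cfc_shift hA.isHermitian s]
  exact cfc_posDef hA fun x hx => by linarith [spec_pos hA x hx]

lemma res_shift {A : Mat} (hA : A.PosDef) (s : ℝ) :
    cfc (fun x : ℝ => (x+s)⁻¹) A = cfc (fun x : ℝ => x⁻¹) (A + s • 1) := by
  have hsa : IsSelfAdjoint A := hA.isHermitian
  rw [← cfc_shift hA.isHermitian s]
  exact cfc_comp (fun x : ℝ => x⁻¹) (fun x : ℝ => x + s) A hsa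
    (contOn_image _ _ A) (contOn _ A)

lemma cfc_kernel_eq {A : Mat} (hA : A.PosDef) {s : ℝ} (hs : 0 < s) :
    cfc (fun x : ℝ => x * (x+s)⁻¹) A
      = 1 - s • cfc (fun x : ℝ => (x+s)⁻¹) A := by
  have hsa : IsSelfAdjoint A := hA.isHermitian
  have h1 : cfc (fun x : ℝ => x * (x+s)⁻¹) A = cfc (fun x : ℝ => 1 - s * (x+s)⁻¹) A := by
    apply cfc_congr
    intro x hx
    have hx' := spec_pos hA x hx
    field_simp
    ring
  rw [h1, cfc_sub _ _ A (contOn _ A) (contOn _ A)]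
  rw [cfc_const_one ℝ A, cfc_const_mul s (fun x : ℝ => (x+s)⁻¹) A (contOn _ A)]

lemma cfc_log_kernel_eq {A : Mat} (hA : A.PosDef) (s : ℝ) :
    cfc (fun x : ℝ => (1+s)⁻¹ - (x+s)⁻¹) A
      = (1+s)⁻¹ • (1 : Mat) - cfc (fun x : ℝ => (x+s)⁻¹) A := by
  have hsa : IsSelfAdjoint A := hA.isHermitian
  rw [cfc_sub _ _ A (contOn _ A) (contOn _ A), cfc_const _ A, Algebra.algebraMap_eq_smul_one]

lemma loewner_shift {A B : Mat} (hAB : Loewner A B) (s : ℝ) :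
    Loewner (A + s • (1:Mat)) (B + s • (1:Mat)) := by
  unfold Loewner at *
  have h : B + s • (1:Mat) - (A + s • (1:Mat)) = B - A := by abel
  rw [h]
  exact hAB

lemma comb_shift {A B : Mat} {a b s : ℝ} (hab : a + b = 1) :
    a • (A + s • (1:Mat)) + b • (B + s • (1:Mat)) = (a • A + b • B) + s • (1:Mat) := by
  have h : a • (s • (1:Mat)) + b • (s • (1:Mat)) = (a + b) • (s • (1:Mat)) := (add_smul a b _).symm
  rw [smul_add, smul_add]
  rw [hab] at h
  rw [one_smul] at h
  calc a • A + a • s • (1:Mat) + (b • B + b • s • (1:Mat))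
      = (a • A + b • B) + (a • s • (1:Mat) + b • s • (1:Mat)) := by abel
    _ = (a • A + b • B) + s • (1:Mat) := by rw [h]

lemma kernel_concave {A B : Mat} (hA : A.PosDef) (hB : B.PosDef) {a b : ℝ}
    (ha : 0 ≤ a) (hb : 0 ≤ b) (hab : a + b = 1) (hC : (a • A + b • B).PosDef)
    {s : ℝ} (hs : 0 < s) (v : Fin n → ℂ) :
    a * qf (cfc (fun x : ℝ => x * (x+s)⁻¹) A) v + b * qf (cfc (fun x : ℝ => x * (x+s)⁻¹) B) v
      ≤ qf (cfc (fun x : ℝ => x * (x+s)⁻¹) (a • A + b • B)) v := by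
  have hCs : ((a • A + b • B) + s • (1:Mat)).PosDef := shift_posDef hC hs
  have hCs' : (a • (A + s • (1:Mat)) + b • (B + s • (1:Mat))).PosDef := by
    rw [comb_shift hab]; exact hCs
  have hconv := res_convex (shift_posDef hA hs) (shift_posDef hB hs) ha hb hab hCs' v
  rw [comb_shift hab] at hconv
  rw [cfc_kernel_eq hA hs, cfc_kernel_eq hB hs, cfc_kernel_eq hC hs]
  rw [qf_sub, qf_sub, qf_sub, qf_smul, qf_smul, qf_smul]
  rw [res_shift hA s, res_shift hB s, res_shift hC s]
  have h2 := mul_le_mul_of_nonneg_left hconv hs.le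
  have h3 : a * qf 1 v + b * qf 1 v = qf 1 v := by rw [← add_mul, hab, one_mul]
  nlinarith [h2, h3]

lemma kernel_log_mono {A B : Mat} (hA : A.PosDef) (hB : B.PosDef) (hAB : Loewner A B)
    {s : ℝ} (hs : 0 < s) (v : Fin n → ℂ) :
    qf (cfc (fun x : ℝ => (1+s)⁻¹ - (x+s)⁻¹) A) v
      ≤ qf (cfc (fun x : ℝ => (1+s)⁻¹ - (x+s)⁻¹) B) v := by
  rw [cfc_log_kernel_eq hA s, cfc_log_kernel_eq hB s, qf_sub, qf_sub]
  rw [res_shift hA s, res_shift hB s]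
  have hres := res_antitone (shift_posDef hA hs) (shift_posDef hB hs) (loewner_shift hAB s) v
  linarith

lemma qf_rpow_rep {A : Mat} (hA : A.PosDef) {r : ℝ} (hr0 : 0 < r) (hr1 : r < 1) (v : Fin n → ℂ) :
    IntegrableOn (fun s : ℝ => s^(r-1) * qf (cfc (fun x : ℝ => x * (x+s)⁻¹) A) v) (Ioi 0) ∧
    qf (cfc (fun x : ℝ => x ^ r) A) v
      = (Ir r)⁻¹ * ∫ s in Ioi (0:ℝ), s^(r-1) * qf (cfc (fun x : ℝ => x * (x+s)⁻¹) A) v := by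
  classical
  set lam := hA.isHermitian.eigenvalues with hlamdef
  set w := fun i => Complex.normSq ((star (hA.isHermitian.eigenvectorUnitary : Mat) *ᵥ v) i)
    with hwdef
  have hw : ∀ i, 0 ≤ w i := fun i => Complex.normSq_nonneg _
  have hlam : ∀ i, 0 < lam i := fun i => hA.eigenvalues_pos i
  have hFeq : EqOn (fun s : ℝ => s^(r-1) * qf (cfc (fun x : ℝ => x * (x+s)⁻¹) A) v)
      (fun s : ℝ => ∑ i, w i * (s^(r-1) * (lam i * (lam i + s)⁻¹))) (Ioi 0) := by
    intro s _
    simp only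
    rw [qf_cfc hA.isHermitian, Finset.mul_sum]
    exact Finset.sum_congr rfl fun i _ => by ring
  have hterm : ∀ i : Fin n, IntegrableOn
      (fun s : ℝ => w i * (s^(r-1) * (lam i * (lam i + s)⁻¹))) (Ioi 0) :=
    fun i => (integrableOn_rpow_kernel' hr0 hr1 (hlam i)).const_mul (w i)
  have hsummed : IntegrableOn
      (fun s : ℝ => ∑ i, w i * (s^(r-1) * (lam i * (lam i + s)⁻¹))) (Ioi 0) :=
    integrable_finset_sum _ fun i _ => hterm i
  constructor
  · exact hsummed.congr_fun hFeq.symm measurableSet_Ioi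
  · rw [setIntegral_congr_fun measurableSet_Ioi hFeq]
    rw [integral_finset_sum _ fun i _ => hterm i]
    have hone : ∀ i : Fin n, ∫ s in Ioi (0:ℝ), w i * (s^(r-1) * (lam i * (lam i + s)⁻¹))
        = w i * (lam i ^ r * Ir r) := by
      intro i
      rw [integral_const_mul, rpow_rep hr0 hr1 (hlam i)]
    rw [Finset.sum_congr rfl fun i _ => hone i]
    rw [qf_cfc hA.isHermitian, Finset.mul_sum]
    refine Finset.sum_congr rfl fun i _ => ?_
    have hIr := Ir_pos hr0 hr1
    field_simp
    ring

lemma qf_log_rep {A : Mat} (hA : A.PosDef) (v : Fin n → ℂ) :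
    IntegrableOn (fun s : ℝ => qf (cfc (fun x : ℝ => (1+s)⁻¹ - (x+s)⁻¹) A) v) (Ioi 0) ∧
    qf (cfc Real.log A) v
      = ∫ s in Ioi (0:ℝ), qf (cfc (fun x : ℝ => (1+s)⁻¹ - (x+s)⁻¹) A) v := by
  classical
  set lam := hA.isHermitian.eigenvalues with hlamdef
  set w := fun i => Complex.normSq ((star (hA.isHermitian.eigenvectorUnitary : Mat) *ᵥ v) i)
    with hwdef
  have hlam : ∀ i, 0 < lam i := fun i => hA.eigenvalues_pos i
  have hFeq : EqOn (fun s : ℝ => qf (cfc (fun x : ℝ => (1+s)⁻¹ - (x+s)⁻¹) A) v)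
      (fun s : ℝ => ∑ i, w i * ((1+s)⁻¹ - (lam i + s)⁻¹)) (Ioi 0) := by
    intro s _
    simp only
    rw [qf_cfc hA.isHermitian]
    exact Finset.sum_congr rfl fun i _ => by ring
  have hterm : ∀ i : Fin n, IntegrableOn
      (fun s : ℝ => w i * ((1+s)⁻¹ - (lam i + s)⁻¹)) (Ioi 0) :=
    fun i => (integrableOn_res_diff (hlam i)).const_mul (w i)
  have hsummed : IntegrableOn
      (fun s : ℝ => ∑ i, w i * ((1+s)⁻¹ - (lam i + s)⁻¹)) (Ioi 0) :=
    integrable_finset_sum _ fun i _ => hterm i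
  constructor
  · exact hsummed.congr_fun hFeq.symm measurableSet_Ioi
  · rw [setIntegral_congr_fun measurableSet_Ioi hFeq]
    rw [integral_finset_sum _ fun i _ => hterm i]
    have hone : ∀ i : Fin n, ∫ s in Ioi (0:ℝ), w i * ((1+s)⁻¹ - (lam i + s)⁻¹)
        = w i * Real.log (lam i) := by
      intro i
      rw [integral_const_mul, integral_log_rep (hlam i)]
    rw [Finset.sum_congr rfl fun i _ => hone i]
    rw [qf_cfc hA.isHermitian]
    exact Finset.sum_congr rfl fun i _ => by ring

lemma loewner_refl (X : Mat) : Loewner X X := by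
  unfold Loewner
  rw [sub_self]
  exact Matrix.PosSemidef.zero

lemma concavity {A B : Mat} (hA : A.PosDef) (hB : B.PosDef) {a b r : ℝ}
    (ha : 0 < a) (hb : 0 < b) (hab : a + b = 1) (hr0 : 0 < r) (hr1 : r ≤ 1) :
    Loewner (a • cfc (fun x : ℝ => x ^ r) A + b • cfc (fun x : ℝ => x ^ r) B)
      (cfc (fun x : ℝ => x ^ r) (a • A + b • B)) := by
  have hC : (a • A + b • B).PosDef := posDef_comb hA hB ha hb
  rcases eq_or_lt_of_le hr1 with rfl | hr1'
  · have hid : ∀ (X : Mat), X.IsHermitian → cfc (fun x : ℝ => x ^ (1:ℝ)) X = X := by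
      intro X hX
      have hsa : IsSelfAdjoint X := hX
      rw [cfc_congr (fun x _ => Real.rpow_one x), cfc_id' ℝ X]
    rw [hid A hA.isHermitian, hid B hB.isHermitian, hid _ hC.isHermitian]
    exact loewner_refl _
  · have hhermL : (a • cfc (fun x : ℝ => x ^ r) A + b • cfc (fun x : ℝ => x ^ r) B).IsHermitian :=
      (herm_smul (herm_cfc _ A) a).add (herm_smul (herm_cfc _ B) b)
    rw [loewner_iff hhermL (herm_cfc _ _)]
    intro v
    obtain ⟨hintA, hrepA⟩ := qf_rpow_rep hA hr0 hr1' v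
    obtain ⟨hintB, hrepB⟩ := qf_rpow_rep hB hr0 hr1' v
    obtain ⟨hintC, hrepC⟩ := qf_rpow_rep hC hr0 hr1' v
    rw [qf_add, qf_smul, qf_smul, hrepA, hrepB, hrepC]
    have hIr := Ir_pos hr0 hr1'
    have hkey : (a * ∫ s in Ioi (0:ℝ), s^(r-1) * qf (cfc (fun x : ℝ => x * (x+s)⁻¹) A) v)
        + (b * ∫ s in Ioi (0:ℝ), s^(r-1) * qf (cfc (fun x : ℝ => x * (x+s)⁻¹) B) v)
        ≤ ∫ s in Ioi (0:ℝ), s^(r-1) * qf (cfc (fun x : ℝ => x * (x+s)⁻¹) (a • A + b • B)) v := by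
      have e1 : ∫ s in Ioi (0:ℝ), a * (s^(r-1) * qf (cfc (fun x : ℝ => x * (x+s)⁻¹) A) v)
          = a * ∫ s in Ioi (0:ℝ), s^(r-1) * qf (cfc (fun x : ℝ => x * (x+s)⁻¹) A) v :=
        integral_const_mul a _
      have e2 : ∫ s in Ioi (0:ℝ), b * (s^(r-1) * qf (cfc (fun x : ℝ => x * (x+s)⁻¹) B) v)
          = b * ∫ s in Ioi (0:ℝ), s^(r-1) * qf (cfc (fun x : ℝ => x * (x+s)⁻¹) B) v :=
        integral_const_mul b _
      have hsum := integral_add (hintA.const_mul a) (hintB.const_mul b)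
      have hmono : ∫ s in Ioi (0:ℝ), (a * (s^(r-1) * qf (cfc (fun x : ℝ => x * (x+s)⁻¹) A) v)
          + b * (s^(r-1) * qf (cfc (fun x : ℝ => x * (x+s)⁻¹) B) v))
          ≤ ∫ s in Ioi (0:ℝ), s^(r-1) * qf (cfc (fun x : ℝ => x * (x+s)⁻¹) (a • A + b • B)) v := by
        refine setIntegral_mono_on ((hintA.const_mul a).add (hintB.const_mul b)) hintC
          measurableSet_Ioi fun s hs => ?_
        have hsp : (0:ℝ) < s := hs
        have hk := kernel_concave hA hB ha.le hb.le hab hC hsp v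
        have hsr : (0:ℝ) ≤ s^(r-1) := Real.rpow_nonneg hsp.le _
        nlinarith [mul_le_mul_of_nonneg_left hk hsr]
      rw [hsum, e1, e2] at hmono
      exact hmono
    calc a * ((Ir r)⁻¹ * ∫ s in Ioi (0:ℝ), s^(r-1) * qf (cfc (fun x : ℝ => x * (x+s)⁻¹) A) v)
          + b * ((Ir r)⁻¹ * ∫ s in Ioi (0:ℝ), s^(r-1) * qf (cfc (fun x : ℝ => x * (x+s)⁻¹) B) v)
        = (Ir r)⁻¹ * (a * (∫ s in Ioi (0:ℝ), s^(r-1) * qf (cfc (fun x : ℝ => x * (x+s)⁻¹) A) v)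
          + b * ∫ s in Ioi (0:ℝ), s^(r-1) * qf (cfc (fun x : ℝ => x * (x+s)⁻¹) B) v) := by ring
      _ ≤ (Ir r)⁻¹ * ∫ s in Ioi (0:ℝ),
            s^(r-1) * qf (cfc (fun x : ℝ => x * (x+s)⁻¹) (a • A + b • B)) v := by
          exact mul_le_mul_of_nonneg_left hkey (inv_nonneg.mpr hIr.le)

lemma log_mono {A B : Mat} (hA : A.PosDef) (hB : B.PosDef) (hAB : Loewner A B) :
    Loewner (cfc Real.log A) (cfc Real.log B) := by
  rw [loewner_iff (herm_cfc _ _) (herm_cfc _ _)]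
  intro v
  obtain ⟨hintA, hrepA⟩ := qf_log_rep hA v
  obtain ⟨hintB, hrepB⟩ := qf_log_rep hB v
  rw [hrepA, hrepB]
  refine setIntegral_mono_on hintA hintB measurableSet_Ioi fun s hs => ?_
  exact kernel_log_mono hA hB hAB hs v

end Matrix

section Assembly

lemma mpow_eq {A : Mat} (hA : A.PosDef) (t : ℝ) : mpow A t = cfc (fun x : ℝ => x ^ t) A :=
  matFun_eq hA.isHermitian _

lemma mpow_posDef {A : Mat} (hA : A.PosDef) (t : ℝ) : (mpow A t).PosDef := by
  rw [mpow_eq hA]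
  exact cfc_posDef hA fun x hx => Real.rpow_pos_of_pos (spec_pos hA x hx) t

lemma mlog_cfc {A : Mat} (hA : A.PosDef) : mlog A = cfc Real.log A :=
  matFun_eq hA.isHermitian _

lemma cfc_rpow_mpow {A : Mat} (hA : A.PosDef) (t u : ℝ) :
    cfc (fun x : ℝ => x ^ u) (mpow A t) = mpow A (t * u) := by
  have hsa : IsSelfAdjoint A := hA.isHermitian
  rw [mpow_eq hA t, mpow_eq hA (t*u)]
  rw [← cfc_comp (fun x : ℝ => x ^ u) (fun x : ℝ => x ^ t) A hsa (contOn_image _ _ A) (contOn _ A)]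
  apply cfc_congr
  intro x hx
  have hx' := spec_pos hA x hx
  simp only [Function.comp_apply]
  rw [← Real.rpow_mul hx'.le]

lemma mlog_mpow {M : Mat} (hM : M.PosDef) (t : ℝ) :
    mlog (mpow M t) = t • cfc Real.log M := by
  have hsa : IsSelfAdjoint M := hM.isHermitian
  rw [mpow_eq hM t, mlog_cfc (by rw [← mpow_eq hM t]; exact mpow_posDef hM t)]
  rw [← cfc_comp Real.log (fun x : ℝ => x ^ t) M hsa (contOn_image _ _ M) (contOn _ M)]
  have h1 : cfc (Real.log ∘ (fun x : ℝ => x ^ t)) M = cfc (fun x : ℝ => t * Real.log x) M := by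
    apply cfc_congr
    intro x hx
    exact Real.log_rpow (spec_pos hM x hx) t
  rw [h1, cfc_const_mul t Real.log M (contOn _ M)]

lemma loewner_smul {c : ℝ} (hc : 0 ≤ c) {X Y : Mat} (h : Loewner X Y) :
    Loewner (c • X) (c • Y) := by
  unfold Loewner at *
  rw [← smul_sub]
  refine Matrix.PosSemidef.of_dotProduct_mulVec_nonneg (herm_smul h.isHermitian c) fun v => ?_
  rw [dot_herm_eq_qf (herm_smul h.isHermitian c), qf_smul]
  have h2 := h.dotProduct_mulVec_nonneg v
  rw [dot_herm_eq_qf h.isHermitian] at h2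
  have h3 : (0:ℝ) ≤ qf (Y - X) v := by exact_mod_cast h2
  have : (0:ℝ) ≤ c * qf (Y - X) v := mul_nonneg hc h3
  exact_mod_cast this

lemma backward {α p q : ℝ} (hα0 : 0 < α) (hα1 : α < 1) (hp : 0 < p) (hq : 0 < q) (hpq : p ≤ q)
    {A B : Mat} (hA : A.PosDef) (hB : B.PosDef) :
    Loewner (mlog (qam α p A B)) (mlog (qam α q A B)) := by
  have ha : 0 < 1 - α := by linarith
  set Mp : Mat := (1 - α) • mpow A p + α • mpow B p with hMp
  set Mq : Mat := (1 - α) • mpow A q + α • mpow B q with hMq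
  have hMpPD : Mp.PosDef := posDef_comb (mpow_posDef hA p) (mpow_posDef hB p) ha hα0
  have hMqPD : Mq.PosDef := posDef_comb (mpow_posDef hA q) (mpow_posDef hB q) ha hα0
  have hlog_p : mlog (qam α p A B) = (1/p) • cfc Real.log Mp := by
    rw [qam, ← hMp, mlog_mpow hMpPD]
  have hlog_q : mlog (qam α q A B) = (1/q) • cfc Real.log Mq := by
    rw [qam, ← hMq, mlog_mpow hMqPD]
  set r := p / q with hr
  have hr0 : 0 < r := div_pos hp hq
  have hr1 : r ≤ 1 := (div_le_one hq).mpr hpq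
  have hconc := concavity (mpow_posDef hA q) (mpow_posDef hB q) ha hα0 (by ring) hr0 hr1
  have hqr : q * r = p := by
    rw [hr]
    field_simp
  have hres1 : cfc (fun x : ℝ => x ^ r) (mpow A q) = mpow A p := by
    rw [cfc_rpow_mpow hA q r, hqr]
  have hres2 : cfc (fun x : ℝ => x ^ r) (mpow B q) = mpow B p := by
    rw [cfc_rpow_mpow hB q r, hqr]
  rw [hres1, hres2] at hconc
  have hMqr : (cfc (fun x : ℝ => x ^ r) Mq).PosDef :=
    cfc_posDef hMqPD fun x hx => Real.rpow_pos_of_pos (spec_pos hMqPD x hx) r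
  have hlog := log_mono hMpPD hMqr hconc
  have hcomm : cfc Real.log (cfc (fun x : ℝ => x ^ r) Mq) = r • cfc Real.log Mq := by
    rw [← mpow_eq hMqPD r, ← mlog_cfc (mpow_posDef hMqPD r), mlog_mpow hMqPD r]
  rw [hcomm] at hlog
  have hsm := loewner_smul (by positivity : (0:ℝ) ≤ 1/p) hlog
  rw [smul_smul] at hsm
  have hco : (1/p) * r = 1/q := by
    rw [hr]
    field_simp
  rw [hco] at hsm
  rw [hlog_p, hlog_q]
  exact hsm


lemma herm_algebraMap (x : ℝ) : (algebraMap ℝ Mat x).IsHermitian := by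
  rw [Algebra.algebraMap_eq_smul_one]
  exact herm_smul Matrix.isHermitian_one x

lemma matFun_algebraMap (f : ℝ → ℝ) (x : ℝ) :
    matFun f (algebraMap ℝ Mat x) = algebraMap ℝ Mat (f x) := by
  rw [matFun_eq (herm_algebraMap x), cfc_algebraMap]

lemma smul_algebraMap (c x : ℝ) :
    c • algebraMap ℝ Mat x = algebraMap ℝ Mat (c * x) := by
  rw [Algebra.algebraMap_eq_smul_one, Algebra.algebraMap_eq_smul_one, smul_smul]

lemma mpow_algebraMap (x t : ℝ) : mpow (algebraMap ℝ Mat x) t = algebraMap ℝ Mat (x ^ t) :=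
  matFun_algebraMap _ x

lemma mlog_algebraMap (x : ℝ) : mlog (algebraMap ℝ Mat x) = algebraMap ℝ Mat (Real.log x) :=
  matFun_algebraMap _ x

lemma qam_algebraMap (α t x y : ℝ) :
    qam α t (algebraMap ℝ Mat x) (algebraMap ℝ Mat y)
      = algebraMap ℝ Mat (((1-α) * x ^ t + α * y ^ t) ^ (1/t)) := by
  rw [qam, mpow_algebraMap, mpow_algebraMap, smul_algebraMap, smul_algebraMap,
    ← map_add, mpow_algebraMap]

lemma posDef_smul_one {c : ℝ} (hc : 0 < c) : ((c • (1:Mat)) : Mat).PosDef := by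
  refine Matrix.PosDef.of_dotProduct_mulVec_pos (herm_smul Matrix.isHermitian_one c) fun v hv => ?_
  rw [dot_herm_eq_qf (herm_smul Matrix.isHermitian_one c), Complex.zero_lt_real, qf_smul]
  exact mul_pos hc (qf_pos Matrix.PosDef.one hv)

end Assembly

section Forward

lemma loewner_algebraMap {x y : ℝ}
    (h : Loewner (algebraMap ℝ (Matrix (Fin 1) (Fin 1) ℂ) x) (algebraMap ℝ _ y)) : x ≤ y := by
  have hv : (fun _ => 1 : Fin 1 → ℂ) ≠ 0 := by
    intro hc
    have := congrFun hc 0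
    simp at this
  have h2 := (loewner_iff (herm_algebraMap x) (herm_algebraMap y)).mp h (fun _ => 1)
  rw [Algebra.algebraMap_eq_smul_one, Algebra.algebraMap_eq_smul_one, qf_smul, qf_smul] at h2
  have h3 : 0 < qf (1 : Matrix (Fin 1) (Fin 1) ℂ) (fun _ => 1) := qf_pos Matrix.PosDef.one hv
  exact le_of_mul_le_mul_right h2 h3

lemma scalar_strict {α p q : ℝ} (hα0 : 0 < α) (hα1 : α < 1) (hq : 0 < q) (hqp : q < p) :
    (1/q) * Real.log ((1-α) + α * (2:ℝ)^q) < (1/p) * Real.log ((1-α) + α * (2:ℝ)^p) := by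
  have hp : 0 < p := lt_trans hq hqp
  have ha : 0 < 1 - α := by linarith
  set u := (2:ℝ)^q with hu
  have hu1 : 1 < u := by
    rw [hu]
    rw [Real.one_lt_rpow_iff_of_pos two_pos]
    exact Or.inl ⟨one_lt_two, hq⟩
  set r := p / q with hr
  have hr1 : 1 < r := (one_lt_div hq).mpr hqp
  have hqr : q * r = p := by
    rw [hr]
    field_simp
  have hur : u ^ r = (2:ℝ)^p := by
    rw [hu, ← Real.rpow_mul (le_of_lt two_pos), hqr]
  have hconv := (strictConvexOn_rpow hr1).2 (Set.mem_Ici.mpr zero_le_one)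
    (Set.mem_Ici.mpr (le_of_lt (lt_trans one_pos hu1))) (ne_of_lt hu1) ha hα0 (by ring)
  simp only [smul_eq_mul, mul_one, Real.one_rpow] at hconv
  rw [hur] at hconv
  -- hconv : ((1-α) + α * u) ^ r < (1-α) + α * 2^p
  have hmq : 0 < (1-α) + α * u := by positivity
  have hmp : 0 < (1-α) + α * (2:ℝ)^p := by positivity
  have hlt : r * Real.log ((1-α) + α * u) < Real.log ((1-α) + α * (2:ℝ)^p) := by
    rw [← Real.log_rpow hmq]
    exact Real.log_lt_log (Real.rpow_pos_of_pos hmq r) hconv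
  have hmul := mul_lt_mul_of_pos_left hlt (one_div_pos.mpr hp)
  have heq : (1/p) * (r * Real.log ((1-α) + α * u)) = (1/q) * Real.log ((1-α) + α * u) := by
    rw [hr]
    field_simp
  rw [heq] at hmul
  exact hmul

lemma forward {α p q : ℝ} (hα0 : 0 < α) (hα1 : α < 1) (hp : 0 < p) (hq : 0 < q)
    (h : ∀ (n : ℕ) (A B : Matrix (Fin n) (Fin n) ℂ), A.PosDef → B.PosDef →
      Loewner (mlog (qam α p A B)) (mlog (qam α q A B))) : p ≤ q := by
  by_contra hpq
  push_neg at hpq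
  have hA : (algebraMap ℝ (Matrix (Fin 1) (Fin 1) ℂ) 1).PosDef := by
    rw [Algebra.algebraMap_eq_smul_one]
    exact posDef_smul_one one_pos
  have hB : (algebraMap ℝ (Matrix (Fin 1) (Fin 1) ℂ) 2).PosDef := by
    rw [Algebra.algebraMap_eq_smul_one]
    exact posDef_smul_one two_pos
  have hL := h 1 _ _ hA hB
  rw [qam_algebraMap, qam_algebraMap, mlog_algebraMap, mlog_algebraMap] at hL
  have hle := loewner_algebraMap hL
  have h1p : (1:ℝ) ^ p = 1 := Real.one_rpow p
  have h1q : (1:ℝ) ^ q = 1 := Real.one_rpow q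
  rw [h1p, h1q, mul_one] at hle
  have hmp : 0 < (1-α) + α * (2:ℝ)^p := by
    have : (0:ℝ) < (2:ℝ)^p := Real.rpow_pos_of_pos two_pos p
    nlinarith
  have hmq : 0 < (1-α) + α * (2:ℝ)^q := by
    have : (0:ℝ) < (2:ℝ)^q := Real.rpow_pos_of_pos two_pos q
    nlinarith
  rw [Real.log_rpow hmp, Real.log_rpow hmq] at hle
  have := scalar_strict hα0 hα1 hq hpq
  linarith

end Forward

end QamAux


theorem stmt1 (α p q : ℝ) (hα0 : 0 < α) (hα1 : α < 1) (hp : 0 < p) (hq : 0 < q) :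
    (∀ (n : ℕ) (A B : Matrix (Fin n) (Fin n) ℂ), A.PosDef → B.PosDef →
        Loewner (mlog (qam α p A B)) (mlog (qam α q A B))) ↔ p ≤ q := by
  constructor
  · intro h
    exact QamAux.forward hα0 hα1 hp hq h
  · intro hpq n A B hA hB
    exact QamAux.backward hα0 hα1 hp hq hpq hA hB
end

section
/- Let 0 < α < 1 and let A, B be n×n positive definite complex matrices. Then, as p → 0 from the right, R_{α,p}(A,B) = (A^{((1-α)/2)p} · B^{αp} · A^{((1-α)/2)p})^{1/p} converges to LE_α(A,B) = exp((1-α)·log A + α·log B). -/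
open Matrix
open scoped ComplexOrder

lemma scalar_log_bound {x : ℝ} (hx : 0 < x) (h : |x - 1| ≤ 1 / 2) :
    |Real.log x - (x - 1)| ≤ 2 * (x - 1) ^ 2 := by
  have h1 : Real.log x ≤ x - 1 := Real.log_le_sub_one_of_pos hx
  have h2 : Real.log x⁻¹ ≤ x⁻¹ - 1 := Real.log_le_sub_one_of_pos (by positivity)
  rw [Real.log_inv] at h2
  have hxx : x * x⁻¹ = 1 := mul_inv_cancel₀ hx.ne'
  rw [abs_le] at h ⊢
  constructor <;> nlinarith [sq_nonneg (x - 1), sq_nonneg x⁻¹, inv_pos.mpr hx]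

section Aux
variable {n : ℕ}
open scoped Matrix.Norms.L2Operator

noncomputable local instance : CStarAlgebra (Matrix (Fin n) (Fin n) ℂ) := {}

lemma matFun_eq {A : Matrix (Fin n) (Fin n) ℂ} (hA : A.IsHermitian) (f : ℝ → ℝ) :
    matFun f A = cfc f A := by
  rw [matFun, dif_pos hA, hA.cfc_eq]

lemma spectrum_pos_of_posDef {A : Matrix (Fin n) (Fin n) ℂ} (hA : A.PosDef) :
    ∀ x ∈ spectrum ℝ A, 0 < x := by
  intro x hx
  rw [hA.isHermitian.spectrum_real_eq_range_eigenvalues] at hx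
  obtain ⟨i, rfl⟩ := hx
  exact hA.eigenvalues_pos i

lemma posDef_conj_ct {B E : Matrix (Fin n) (Fin n) ℂ} (hE : E.PosDef) (hB : IsUnit B) :
    (Bᴴ * E * B).PosDef := by
  exact hE.conjTranspose_mul_mul_same (Matrix.mulVec_injective_iff_isUnit.mpr hB)

lemma posDef_conj {C E : Matrix (Fin n) (Fin n) ℂ} (hE : E.PosDef) (hC : IsUnit C) :
    (C * E * Cᴴ).PosDef := by
  have hCH : IsUnit Cᴴ := by
    rw [Matrix.isUnit_iff_isUnit_det] at hC ⊢
    simpa [Matrix.det_conjTranspose] using hC.star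
  simpa using posDef_conj_ct hE hCH

lemma posDef_cfc' {A : Matrix (Fin n) (Fin n) ℂ} (hA : A.IsHermitian) {f : ℝ → ℝ}
    (hf : ∀ x, 0 < f x) : (cfc f A).PosDef := by
  rw [hA.cfc_eq, Matrix.IsHermitian.cfc]
  have hU : IsUnit (hA.eigenvectorUnitary : Matrix (Fin n) (Fin n) ℂ) :=
    ⟨Unitary.toUnits hA.eigenvectorUnitary, rfl⟩
  have hD : (diagonal (RCLike.ofReal ∘ f ∘ hA.eigenvalues) : Matrix (Fin n) (Fin n) ℂ).PosDef := by
    rw [posDef_diagonal_iff]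
    intro i
    exact Complex.zero_lt_real.mpr (hf _)
  simpa [Matrix.star_eq_conjTranspose] using posDef_conj hD hU

lemma posDef_exp_smul (S : Matrix (Fin n) (Fin n) ℂ) (hS : IsSelfAdjoint S) (r : ℝ) :
    (NormedSpace.exp (r • S)).PosDef := by
  have hrs : IsSelfAdjoint (r • S) := IsSelfAdjoint.smul (star_trivial r) hS
  rw [← CFC.real_exp_eq_normedSpace_exp hrs]
  exact posDef_cfc' (by exact hrs) (fun x => Real.exp_pos x)

lemma mpow_eq_exp {A : Matrix (Fin n) (Fin n) ℂ} (hA : A.PosDef) (s : ℝ) :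
    mpow A s = NormedSpace.exp (s • cfc Real.log A) := by
  have hsa : IsSelfAdjoint A := hA.isHermitian
  have hspec := spectrum_pos_of_posDef hA
  have hlogcont : ContinuousOn Real.log (spectrum ℝ A) :=
    Real.continuousOn_log.mono (fun x hx => (hspec x hx).ne')
  have h1 : mpow A s = cfc (fun x : ℝ => Real.exp (s * Real.log x)) A := by
    rw [mpow, matFun_eq hA.isHermitian]
    exact cfc_congr (fun x hx => by
      rw [Real.rpow_def_of_pos (hspec x hx), mul_comm])
  rw [h1]
  have h2 : (fun x : ℝ => Real.exp (s * Real.log x)) = Real.exp ∘ (fun x => s * Real.log x) := rfl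
  rw [h2, cfc_comp Real.exp (fun x => s * Real.log x) A hsa (by fun_prop)
    (by exact hlogcont.const_smul s)]
  rw [cfc_const_mul s Real.log A hlogcont]
  exact CFC.real_exp_eq_normedSpace_exp
    (IsSelfAdjoint.smul (star_trivial s) (cfc_predicate Real.log A))

lemma log_estimate (hn : 0 < n) {M : Matrix (Fin n) (Fin n) ℂ} (hM : M.PosDef)
    (hsmall : ‖M - 1‖ ≤ 1 / 2) :
    ‖cfc Real.log M - (M - 1)‖ ≤ 2 * ‖M - 1‖ ^ 2 := by
  haveI : Nonempty (Fin n) := ⟨⟨0, hn⟩⟩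
  have hsa : IsSelfAdjoint M := hM.isHermitian
  have hspec := spectrum_pos_of_posDef hM
  have hlogcont : ContinuousOn Real.log (spectrum ℝ M) :=
    Real.continuousOn_log.mono (fun x hx => (hspec x hx).ne')
  have hb : ∀ x ∈ spectrum ℝ M, |x - 1| ≤ ‖M - 1‖ := by
    intro x hx
    have hmem : x - 1 ∈ spectrum ℝ (M - algebraMap ℝ _ 1) := by
      rw [← spectrum.sub_singleton_eq]
      exact Set.sub_mem_sub hx rfl
    have := spectrum.norm_le_norm_of_mem hmem
    simpa using this
  have key : cfc Real.log M - (M - 1) = cfc (fun x : ℝ => Real.log x - (x - 1)) M := by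
    rw [cfc_sub Real.log (fun x : ℝ => x - 1) M hlogcont (by fun_prop)]
    congr 1
    rw [cfc_sub (fun x : ℝ => x) (fun _ : ℝ => (1:ℝ)) M (by fun_prop) (by fun_prop),
      cfc_id' ℝ M, cfc_const 1 M]
    simp
  rw [key]
  refine norm_cfc_le (by positivity) (fun x hx => ?_)
  have h1 := hb x hx
  have h2 : |Real.log x - (x - 1)| ≤ 2 * (x - 1) ^ 2 :=
    scalar_log_bound (hspec x hx) (h1.trans hsmall)
  calc ‖Real.log x - (x - 1)‖ = |Real.log x - (x - 1)| := rfl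
    _ ≤ 2 * (x - 1) ^ 2 := h2
    _ ≤ 2 * ‖M - 1‖ ^ 2 := by
        have : (x - 1) ^ 2 ≤ ‖M - 1‖ ^ 2 := by
          rw [← sq_abs]
          exact pow_le_pow_left₀ (abs_nonneg _) h1 2
        linarith

lemma hasDerivAt_triple (C D : Matrix (Fin n) (Fin n) ℂ) :
    HasDerivAt (fun p : ℝ =>
      NormedSpace.exp (p • C) * NormedSpace.exp (p • D) * NormedSpace.exp (p • C))
      (C + D + C) 0 := by
  have hC : HasDerivAt (fun p : ℝ => NormedSpace.exp (p • C)) C 0 := by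
    simpa [NormedSpace.exp_zero] using hasDerivAt_exp_smul_const (𝕂 := ℝ) C (0 : ℝ)
  have hD : HasDerivAt (fun p : ℝ => NormedSpace.exp (p • D)) D 0 := by
    simpa [NormedSpace.exp_zero] using hasDerivAt_exp_smul_const (𝕂 := ℝ) D (0 : ℝ)
  have := (hC.mul hD).mul hC
  simp only [Pi.mul_apply, NormedSpace.exp_zero, zero_smul, one_mul, mul_one] at this
  exact this

lemma aux_main (α : ℝ) (hn : 0 < n) (A B : Matrix (Fin n) (Fin n) ℂ)
    (hA : A.PosDef) (hB : B.PosDef) :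
    Filter.Tendsto (fun p : ℝ => renyiMean α p A B) (nhdsWithin 0 (Set.Ioi 0))
      (nhds (logEuclid α A B)) := by
  haveI : Nonempty (Fin n) := ⟨⟨0, hn⟩⟩
  set X := cfc Real.log A with hXdef
  set Y := cfc Real.log B with hYdef
  have hXsa : IsSelfAdjoint X := cfc_predicate Real.log A
  have hYsa : IsSelfAdjoint Y := cfc_predicate Real.log B
  set Cx : Matrix (Fin n) (Fin n) ℂ := ((1 - α) / 2) • X with hCxdef
  set Ay : Matrix (Fin n) (Fin n) ℂ := α • Y with hAydef
  have hCxsa : IsSelfAdjoint Cx := IsSelfAdjoint.smul (star_trivial _) hXsa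
  have hAysa : IsSelfAdjoint Ay := IsSelfAdjoint.smul (star_trivial _) hYsa
  set M : ℝ → Matrix (Fin n) (Fin n) ℂ := fun p =>
    NormedSpace.exp (p • Cx) * NormedSpace.exp (p • Ay) * NormedSpace.exp (p • Cx)
    with hMdef
  have hMpos : ∀ p : ℝ, (M p).PosDef := by
    intro p
    have hE : (NormedSpace.exp (p • Ay)).PosDef := posDef_exp_smul Ay hAysa p
    have hCpos : (NormedSpace.exp (p • Cx)).PosDef := posDef_exp_smul Cx hCxsa p
    have hsa : (NormedSpace.exp (p • Cx)).IsHermitian := hCpos.isHermitian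
    have := posDef_conj hE hCpos.isUnit
    rwa [hsa.eq] at this
  set L : ℝ → Matrix (Fin n) (Fin n) ℂ := fun p => cfc Real.log (M p) with hLdef
  set K : Matrix (Fin n) (Fin n) ℂ := Cx + Ay + Cx with hKdef
  -- identification of renyiMean with exp((1/p) • L p)
  have hrenyi : ∀ p : ℝ, renyiMean α p A B = NormedSpace.exp ((1 / p) • L p) := by
    intro p
    rw [renyiMean, mpow_eq_exp hA, mpow_eq_exp hB]
    have e1 : ((1 - α) / 2 * p) • X = p • Cx := by
      rw [hCxdef, smul_smul, mul_comm]
    have e2 : (α * p) • Y = p • Ay := by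
      rw [hAydef, smul_smul, mul_comm]
    rw [e1, e2, mpow_eq_exp (hMpos p), one_div]
  -- derivative of M at 0
  have hderiv : HasDerivAt M K 0 := hasDerivAt_triple Cx Ay
  have hM0 : M 0 = 1 := by simp [hMdef, NormedSpace.exp_zero]
  -- slope tendsto
  have hslope : Filter.Tendsto (fun p : ℝ => p⁻¹ • (M p - 1)) (nhdsWithin 0 {(0:ℝ)}ᶜ)
      (nhds K) := by
    have h := hasDerivAt_iff_tendsto_slope.mp hderiv
    have : (slope M 0) = fun p : ℝ => p⁻¹ • (M p - 1) := by
      funext p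
      rw [slope_def_module, hM0, sub_zero]
    rwa [this] at h
  have hIoi : nhdsWithin (0:ℝ) (Set.Ioi 0) ≤ nhdsWithin 0 {(0:ℝ)}ᶜ :=
    nhdsWithin_mono 0 (fun x hx => ne_of_gt hx)
  have hslope' : Filter.Tendsto (fun p : ℝ => p⁻¹ • (M p - 1)) (nhdsWithin 0 (Set.Ioi 0))
      (nhds K) := hslope.mono_left hIoi
  -- eventual bound on ‖M p - 1‖
  have hnormbound : ∀ᶠ p in nhdsWithin (0:ℝ) (Set.Ioi 0), ‖M p - 1‖ ≤ (‖K‖ + 1) * p := by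
    have hnorm : Filter.Tendsto (fun p : ℝ => ‖p⁻¹ • (M p - 1)‖) (nhdsWithin 0 (Set.Ioi 0))
        (nhds ‖K‖) := hslope'.norm
    have hlt : ∀ᶠ p in nhdsWithin (0:ℝ) (Set.Ioi 0), ‖p⁻¹ • (M p - 1)‖ < ‖K‖ + 1 :=
      hnorm.eventually_lt_const (by linarith)
    filter_upwards [hlt, self_mem_nhdsWithin] with p hp hpmem
    have hp0 : 0 < p := hpmem
    have : ‖M p - 1‖ = p * ‖p⁻¹ • (M p - 1)‖ := by
      rw [norm_smul, norm_inv, Real.norm_eq_abs, abs_of_pos hp0]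
      field_simp
    rw [this]
    have := le_of_lt hp
    calc p * ‖p⁻¹ • (M p - 1)‖ ≤ p * (‖K‖ + 1) := by
          exact mul_le_mul_of_nonneg_left this hp0.le
      _ = (‖K‖ + 1) * p := mul_comm _ _
  -- second term tends to zero
  have hsecond : Filter.Tendsto (fun p : ℝ => p⁻¹ • (L p - (M p - 1)))
      (nhdsWithin 0 (Set.Ioi 0)) (nhds 0) := by
    have hgz : Filter.Tendsto (fun p : ℝ => 2 * (‖K‖ + 1) ^ 2 * p) (nhdsWithin 0 (Set.Ioi 0))
        (nhds 0) := by
      have : Filter.Tendsto (fun p : ℝ => p) (nhdsWithin 0 (Set.Ioi 0)) (nhds 0) :=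
        tendsto_nhdsWithin_of_tendsto_nhds Filter.tendsto_id
      simpa using this.const_mul (2 * (‖K‖ + 1) ^ 2)
    refine squeeze_zero_norm' ?_ hgz
    have hhalf : ∀ᶠ p in nhdsWithin (0:ℝ) (Set.Ioi 0), (‖K‖ + 1) * p ≤ 1 / 2 := by
      have : Filter.Tendsto (fun p : ℝ => (‖K‖ + 1) * p) (nhdsWithin 0 (Set.Ioi 0)) (nhds 0) := by
        have hid : Filter.Tendsto (fun p : ℝ => p) (nhdsWithin 0 (Set.Ioi 0)) (nhds 0) :=
          tendsto_nhdsWithin_of_tendsto_nhds Filter.tendsto_id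
        simpa using hid.const_mul (‖K‖ + 1)
      exact this.eventually_le_const (by norm_num)
    filter_upwards [hnormbound, hhalf, self_mem_nhdsWithin] with p hbd hhf hpmem
    have hp0 : 0 < p := hpmem
    have hsm : ‖M p - 1‖ ≤ 1 / 2 := hbd.trans hhf
    have hest : ‖L p - (M p - 1)‖ ≤ 2 * ‖M p - 1‖ ^ 2 := log_estimate hn (hMpos p) hsm
    have hKnn : (0:ℝ) ≤ ‖K‖ + 1 := by positivity
    calc ‖p⁻¹ • (L p - (M p - 1))‖ = p⁻¹ * ‖L p - (M p - 1)‖ := by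
          rw [norm_smul, norm_inv, Real.norm_eq_abs, abs_of_pos hp0]
      _ ≤ p⁻¹ * (2 * ‖M p - 1‖ ^ 2) := by
          exact mul_le_mul_of_nonneg_left hest (by positivity)
      _ ≤ p⁻¹ * (2 * ((‖K‖ + 1) * p) ^ 2) := by
          have : ‖M p - 1‖ ^ 2 ≤ ((‖K‖ + 1) * p) ^ 2 :=
            pow_le_pow_left₀ (norm_nonneg _) hbd 2
          have h2 : 2 * ‖M p - 1‖ ^ 2 ≤ 2 * ((‖K‖ + 1) * p) ^ 2 := by linarith
          exact mul_le_mul_of_nonneg_left h2 (by positivity)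
      _ = 2 * (‖K‖ + 1) ^ 2 * p := by
          field_simp
  -- combine
  have hLlim : Filter.Tendsto (fun p : ℝ => (1 / p) • L p) (nhdsWithin 0 (Set.Ioi 0))
      (nhds K) := by
    have hsum := hslope'.add hsecond
    rw [add_zero] at hsum
    refine hsum.congr (fun p => ?_)
    rw [one_div, ← smul_add]
    congr 1
    abel
  -- exp is continuous
  have hexp : Filter.Tendsto (fun p : ℝ => NormedSpace.exp ((1 / p) • L p))
      (nhdsWithin 0 (Set.Ioi 0)) (nhds (NormedSpace.exp K)) :=
    (NormedSpace.exp_analytic (𝕂 := ℝ) K).continuousAt.tendsto.comp hLlim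
  -- identify the limit
  have hlimit : logEuclid α A B = NormedSpace.exp K := by
    rw [logEuclid, mlog, mlog, matFun_eq hA.isHermitian, matFun_eq hB.isHermitian]
    have hKsa : IsSelfAdjoint ((1 - α) • X + α • Y) :=
      (IsSelfAdjoint.smul (star_trivial _) hXsa).add (IsSelfAdjoint.smul (star_trivial _) hYsa)
    rw [mexp, matFun_eq hKsa, CFC.real_exp_eq_normedSpace_exp hKsa]
    congr 1
    rw [hKdef, hCxdef, hAydef]
    module
  rw [hlimit]
  exact hexp.congr (fun p => (hrenyi p).symm)

end Aux

theorem stmt5 (α : ℝ) (hα0 : 0 < α) (hα1 : α < 1)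
    (n : ℕ) (A B : Matrix (Fin n) (Fin n) ℂ) (hA : A.PosDef) (hB : B.PosDef) :
    Filter.Tendsto (fun p : ℝ => renyiMean α p A B) (nhdsWithin 0 (Set.Ioi 0))
      (nhds (logEuclid α A B)) := by
  rcases Nat.eq_zero_or_pos n with hn | hn
  · subst hn
    haveI : Subsingleton (Matrix (Fin 0) (Fin 0) ℂ) := ⟨fun a b => by ext i j; exact i.elim0⟩
    have h : (fun p : ℝ => renyiMean α p A B) = fun _ => logEuclid α A B :=
      funext fun p => Subsingleton.elim _ _
    rw [h]
    exact tendsto_const_nhds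
  · exact aux_main α hn A B hA hB
end
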